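/- arXiv:2510.02405 — 2 statements merged into one kernel-verified Lean document; each statement's English description precedes it below -/
import Mathlib

section
/- Let O, S ∈ ℝ^{n×m} be matrices such that every centered column Ō_j and S̄_j is nonzero. Then Corr(O) = Corr(S) if and only if there exist an orthogonal matrix Q ∈ ℝ^{n×n} and a diagonal matrix N ∈ ℝ^{m×m} with strictly positive diagonal entries such that Q Ō N = S̄. -/
open Matrix

/-- Euclidean dot product on `ℝ^n`. -/
noncomputable def dotv {n : ℕ} (u v : Fin n → ℝ) : ℝ := ∑ i, u i * v i

/-- Euclidean norm on `ℝ^n`. -/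
noncomputable def enormv {n : ℕ} (u : Fin n → ℝ) : ℝ := Real.sqrt (dotv u u)

/-- Arithmetic mean of a vector. -/
noncomputable def meanv {n : ℕ} (f : Fin n → ℝ) : ℝ := (∑ i, f i) / n

/-- Mean-centered vector `f̄ = f - Mean(f)·𝟙`. -/
noncomputable def centv {n : ℕ} (f : Fin n → ℝ) : Fin n → ℝ := fun i => f i - meanv f

/-- Variance of a vector: `Var(f) = (1/n)‖f̄‖²`. -/
noncomputable def varv {n : ℕ} (f : Fin n → ℝ) : ℝ := (∑ i, (centv f i) ^ 2) / n

/-- The `j`-th column of a matrix. -/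
noncomputable def col {n m : ℕ} (A : Matrix (Fin n) (Fin m) ℝ) (j : Fin m) : Fin n → ℝ :=
  fun i => A i j

/-- Cosine similarity matrix: `S_c(A)_{jk} = (A_j·A_k)/(‖A_j‖‖A_k‖)`. -/
noncomputable def cosSim {n m : ℕ} (A : Matrix (Fin n) (Fin m) ℝ) : Matrix (Fin m) (Fin m) ℝ :=
  fun j k => dotv (_root_.col A j) (_root_.col A k) / (enormv (_root_.col A j) * enormv (_root_.col A k))

/-- Column-wise mean centering of a matrix: `Ā_j = A_j − Mean(A_j)·𝟙`. -/
noncomputable def centM {n m : ℕ} (A : Matrix (Fin n) (Fin m) ℝ) : Matrix (Fin n) (Fin m) ℝ :=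
  fun i j => A i j - meanv (_root_.col A j)

/-- Pearson correlation matrix: cosine similarity of the centered columns. -/
noncomputable def corrM {n m : ℕ} (A : Matrix (Fin n) (Fin m) ℝ) : Matrix (Fin m) (Fin m) ℝ :=
  cosSim (centM A)

/-- Frobenius norm of a matrix. -/
noncomputable def frob {n m : ℕ} (A : Matrix (Fin n) (Fin m) ℝ) : ℝ :=
  Real.sqrt (∑ i, ∑ j, (A i j) ^ 2)

/-- Given the diagonal entries `σ` of a diagonal matrix `Σ` with nonnegative entries,
`Isig σ` is the diagonal matrix `I_Σ` with `(I_Σ)_{ii} = 1` if `Σ_{ii} > 0` and `0` otherwise. -/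
noncomputable def Isig {n : ℕ} (σ : Fin n → ℝ) : Matrix (Fin n) (Fin n) ℝ :=
  Matrix.diagonal (fun i => if 0 < σ i then (1 : ℝ) else 0)


section CorrAux

open scoped RealInnerProductSpace

private lemma dotv_nonneg_self {n : ℕ} (u : Fin n → ℝ) : 0 ≤ dotv u u :=
  Finset.sum_nonneg fun i _ => mul_self_nonneg (u i)

private lemma dotv_pos_self {n : ℕ} {u : Fin n → ℝ} (h : u ≠ 0) : 0 < dotv u u := by
  obtain ⟨i, hi⟩ := Function.ne_iff.mp h
  exact Finset.sum_pos' (fun j _ => mul_self_nonneg (u j))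
    ⟨i, Finset.mem_univ i, mul_self_pos.mpr hi⟩

private lemma enormv_pos {n : ℕ} {u : Fin n → ℝ} (h : u ≠ 0) : 0 < enormv u :=
  Real.sqrt_pos.mpr (dotv_pos_self h)

private lemma dotv_smul' {n : ℕ} (a b : ℝ) (u v : Fin n → ℝ) :
    dotv (fun i => a * u i) (fun i => b * v i) = a * b * dotv u v := by
  simp only [dotv, Finset.mul_sum]; exact Finset.sum_congr rfl fun i _ => by ring

private lemma enormv_smul' {n : ℕ} {a : ℝ} (ha : 0 ≤ a) (u : Fin n → ℝ) :
    enormv (fun i => a * u i) = a * enormv u := by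
  rw [enormv, dotv_smul', show a * a * dotv u u = a ^ 2 * dotv u u by ring,
    Real.sqrt_mul (sq_nonneg a), Real.sqrt_sq ha, enormv]

private lemma dot_gram {n m : ℕ} (A : Matrix (Fin n) (Fin m) ℝ) (x y : Fin m → ℝ) :
    (A *ᵥ x) ⬝ᵥ (A *ᵥ y) = x ⬝ᵥ ((Aᵀ * A) *ᵥ y) := by
  rw [← mulVec_mulVec, dotProduct_mulVec x, vecMul_transpose, dotProduct_mulVec]

private lemma gram_entry {n m : ℕ} (A : Matrix (Fin n) (Fin m) ℝ) (j k : Fin m) :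
    (Aᵀ * A) j k = dotv (_root_.col A j) (_root_.col A k) := by
  simp [Matrix.mul_apply, dotv, _root_.col]

private lemma mulVec_dot_of_orth {n : ℕ} {Q : Matrix (Fin n) (Fin n) ℝ} (hQ : Qᵀ * Q = 1)
    (u v : Fin n → ℝ) : dotv (Q *ᵥ u) (Q *ᵥ v) = dotv u v := by
  show (Q *ᵥ u) ⬝ᵥ (Q *ᵥ v) = u ⬝ᵥ v
  rw [dot_gram, hQ, one_mulVec]

private lemma col_mul_diag {n m : ℕ} (A : Matrix (Fin n) (Fin m) ℝ) (d : Fin m → ℝ)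
    (j : Fin m) : _root_.col (A * Matrix.diagonal d) j = fun i => d j * _root_.col A j i := by
  funext i
  show (A * Matrix.diagonal d) i j = d j * A i j
  rw [Matrix.mul_diagonal, mul_comm]

private lemma col_mul_assoc {n m : ℕ} (Q : Matrix (Fin n) (Fin n) ℝ)
    (A : Matrix (Fin n) (Fin m) ℝ) (d : Fin m → ℝ) (j : Fin m) :
    _root_.col (Q * A * Matrix.diagonal d) j = fun i => d j * (Q *ᵥ _root_.col A j) i := by
  funext i
  show (Q * A * Matrix.diagonal d) i j = d j * (Q *ᵥ _root_.col A j) i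
  rw [Matrix.mul_diagonal, mul_comm]
  congr 1

private lemma exists_orthogonal_of_gram_eq {n m : ℕ} (A B : Matrix (Fin n) (Fin m) ℝ)
    (h : Aᵀ * A = Bᵀ * B) :
    ∃ Q : Matrix (Fin n) (Fin n) ℝ, Qᵀ * Q = 1 ∧ Q * A = B := by
  set T := Matrix.toEuclideanLin A with hTdef
  set U := Matrix.toEuclideanLin B with hUdef
  have hinner : ∀ x y : EuclideanSpace ℝ (Fin m), ⟪T x, T y⟫ = ⟪U x, U y⟫ := by
    intro x y
    have hA := dot_gram A x y
    have hB := dot_gram B x y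
    rw [h] at hA
    have : (A *ᵥ x) ⬝ᵥ (A *ᵥ y) = (B *ᵥ x) ⬝ᵥ (B *ᵥ y) := hA.trans hB.symm
    simpa [hTdef, hUdef, Matrix.ofLp_toEuclideanLin_apply, PiLp.inner_apply, RCLike.inner_apply, Matrix.toEuclideanLin_apply,
      dotProduct, mul_comm] using this
  have hker : LinearMap.ker T ≤ LinearMap.ker U := by
    intro x hx
    rw [LinearMap.mem_ker] at hx ⊢
    have := hinner x x
    rw [hx, inner_zero_left] at this
    exact inner_self_eq_zero.mp this.symm
  set L0 : LinearMap.range T →ₗ[ℝ] EuclideanSpace ℝ (Fin n) :=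
    ((LinearMap.ker T).liftQ U hker).comp
      (T.quotKerEquivRange.symm.toLinearMap) with hL0def
  have hL0 : ∀ (x : EuclideanSpace ℝ (Fin m)) (hx : T x ∈ LinearMap.range T),
      L0 ⟨T x, hx⟩ = U x := by
    intro x hx
    rw [hL0def]
    simp only [LinearMap.comp_apply, LinearEquiv.coe_toLinearMap]
    rw [LinearMap.quotKerEquivRange_symm_apply_image]
    rfl
  have hnorm : ∀ s : LinearMap.range T, ‖L0 s‖ = ‖(s : EuclideanSpace ℝ (Fin n))‖ := by
    rintro ⟨-, x, rfl⟩
    rw [hL0 x (LinearMap.mem_range_self T x)]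
    rw [← sq_eq_sq₀ (norm_nonneg _) (norm_nonneg _)]
    rw [← real_inner_self_eq_norm_sq, ← real_inner_self_eq_norm_sq]
    exact (hinner x x).symm
  set LI : LinearMap.range T →ₗᵢ[ℝ] EuclideanSpace ℝ (Fin n) := ⟨L0, hnorm⟩ with hLIdef
  set L : EuclideanSpace ℝ (Fin n) →ₗᵢ[ℝ] EuclideanSpace ℝ (Fin n) := LI.extend with hLdef
  have hLT : ∀ x : EuclideanSpace ℝ (Fin m), L (T x) = U x := by
    intro x
    have hmem : T x ∈ LinearMap.range T := LinearMap.mem_range_self T x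
    have := LinearIsometry.extend_apply LI ⟨T x, hmem⟩
    rw [hLdef, this]
    exact hL0 x hmem
  set Q : Matrix (Fin n) (Fin n) ℝ := Matrix.toEuclideanLin.symm L.toLinearMap with hQdef
  have hQL : Matrix.toEuclideanLin Q = L.toLinearMap := by
    rw [hQdef]; exact LinearEquiv.apply_symm_apply _ _
  have hQv : ∀ v : EuclideanSpace ℝ (Fin n),
      Q *ᵥ (WithLp.equiv 2 _ v) = WithLp.equiv 2 _ (L v) := by
    intro v
    rw [WithLp.equiv_apply, WithLp.equiv_apply, ← Matrix.ofLp_toEuclideanLin_apply, hQL]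
    rfl
  refine ⟨Q, ?_, ?_⟩
  · have hcol : ∀ (j : Fin n),
        (fun k => Q k j) = WithLp.equiv 2 _ (L (EuclideanSpace.single j 1)) := by
      intro j
      rw [← hQv, WithLp.equiv_apply, EuclideanSpace.ofLp_single]
      simp [Matrix.mulVec_single_one]
      rfl
    ext i j
    have h1 : (Qᵀ * Q) i j = ∑ k, Q k i * Q k j := by
      simp [Matrix.mul_apply, Matrix.transpose_apply]
    rw [h1]
    have h2 : ∑ k, Q k i * Q k j
        = ⟪L (EuclideanSpace.single i 1), L (EuclideanSpace.single j 1)⟫ := by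
      rw [PiLp.inner_apply]
      simp only [RCLike.inner_apply, starRingEnd_apply, star_trivial]
      refine Finset.sum_congr rfl fun k _ => ?_
      rw [congrFun (hcol i) k, congrFun (hcol j) k]
      exact mul_comm _ _
    rw [h2, L.inner_map_map, EuclideanSpace.inner_single_left]
    simp [EuclideanSpace.single_apply, Matrix.one_apply, eq_comm]
  · have hcols : ∀ j, Q *ᵥ (A *ᵥ Pi.single j 1) = B *ᵥ Pi.single j 1 := by
      intro j
      have h1 : A *ᵥ Pi.single j 1
          = WithLp.equiv 2 _ (T ((WithLp.equiv 2 (Fin m → ℝ)).symm (Pi.single j 1))) := by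
        rw [hTdef]
        simp [Matrix.ofLp_toEuclideanLin_apply]
      rw [h1, hQv, hLT, hUdef]
      simp [Matrix.ofLp_toEuclideanLin_apply]
    ext i j
    have := congrFun (hcols j) i
    simp only [Matrix.mulVec_single_one] at this
    simpa [Matrix.mul_apply, Matrix.mulVec, dotProduct] using this

end CorrAux

/-- Two matrices whose centered columns are all nonzero have the same Pearson
correlation matrix iff their centered matrices are related by an orthogonal matrix and a
positive diagonal rescaling. -/
theorem corr_eq_iff_orthogonal_diag {n m : ℕ}
    (O S : Matrix (Fin n) (Fin m) ℝ)
    (hO : ∀ j, _root_.col (centM O) j ≠ 0) (hS : ∀ j, _root_.col (centM S) j ≠ 0) :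
    corrM O = corrM S ↔
      ∃ (Q : Matrix (Fin n) (Fin n) ℝ) (d : Fin m → ℝ),
        Qᵀ * Q = 1 ∧ (∀ j, 0 < d j) ∧ Q * centM O * Matrix.diagonal d = centM S := by
  set A := centM O with hAdef
  set B := centM S with hBdef
  constructor
  · intro hcorr
    have hcs : ∀ j k : Fin m, dotv (_root_.col A j) (_root_.col A k) /
        (enormv (_root_.col A j) * enormv (_root_.col A k)) = dotv (_root_.col B j) (_root_.col B k) /
        (enormv (_root_.col B j) * enormv (_root_.col B k)) := by
      intro j k
      exact congrFun (congrFun hcorr j) k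
    set d : Fin m → ℝ := fun j => enormv (_root_.col B j) / enormv (_root_.col A j) with hd
    have hdpos : ∀ j, 0 < d j := fun j => div_pos (enormv_pos (hS j)) (enormv_pos (hO j))
    have hgram : (A * Matrix.diagonal d)ᵀ * (A * Matrix.diagonal d) = Bᵀ * B := by
      ext j k
      rw [gram_entry, gram_entry, col_mul_diag, col_mul_diag, dotv_smul']
      have hnaj := enormv_pos (hO j)
      have hnak := enormv_pos (hO k)
      have hnbj := enormv_pos (hS j)
      have hnbk := enormv_pos (hS k)
      have key : d j * d k * dotv (_root_.col A j) (_root_.col A k)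
          = (enormv (_root_.col B j) * enormv (_root_.col B k)) *
            (dotv (_root_.col A j) (_root_.col A k) / (enormv (_root_.col A j) * enormv (_root_.col A k))) := by
        rw [hd]
        field_simp
      rw [key, hcs j k]
      field_simp
    obtain ⟨Q, hQ1, hQ2⟩ := exists_orthogonal_of_gram_eq _ _ hgram
    refine ⟨Q, d, hQ1, hdpos, ?_⟩
    rw [Matrix.mul_assoc]
    exact hQ2
  · rintro ⟨Q, d, hQ1, hdpos, hQAB⟩
    show cosSim A = cosSim B
    funext j k
    have hcolB : ∀ j, _root_.col B j = fun i => d j * (Q *ᵥ _root_.col A j) i := by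
      intro j
      rw [← hQAB]
      exact col_mul_assoc Q A d j
    have hdot : dotv (_root_.col B j) (_root_.col B k) = d j * d k * dotv (_root_.col A j) (_root_.col A k) := by
      rw [hcolB j, hcolB k, dotv_smul', mulVec_dot_of_orth hQ1]
    have hnrm : ∀ j, enormv (_root_.col B j) = d j * enormv (_root_.col A j) := by
      intro j
      rw [hcolB j, enormv_smul' (le_of_lt (hdpos j))]
      congr 1
      rw [enormv, enormv, mulVec_dot_of_orth hQ1]
    show dotv (_root_.col A j) (_root_.col A k) / (enormv (_root_.col A j) * enormv (_root_.col A k))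
        = dotv (_root_.col B j) (_root_.col B k) / (enormv (_root_.col B j) * enormv (_root_.col B k))
    rw [hdot, hnrm j, hnrm k,
      show d j * enormv (_root_.col A j) * (d k * enormv (_root_.col A k))
        = (d j * d k) * (enormv (_root_.col A j) * enormv (_root_.col A k)) by ring,
      show d j * d k * dotv (_root_.col A j) (_root_.col A k)
        = (d j * d k) * dotv (_root_.col A j) (_root_.col A k) by ring,
      mul_div_mul_left _ _ (mul_pos (hdpos j) (hdpos k)).ne']
end

section
/- Let O ∈ ℝ^{n×m} have all centered columns Ō_j nonzero, let M ∈ ℝ^{p×n} satisfy MᵀM = I_n, let N ∈ ℝ^{m×m} be diagonal with strictly positive diagonal entries, and let S ∈ ℝ^{p×m} be any matrix whose centered matrix satisfies S̄ = M Ō N. Then all centered columns of S are nonzero and Corr(S) = Corr(O). -/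
open Matrix

lemma dotv_eq_dot {n : ℕ} (u v : Fin n → ℝ) : dotv u v = u ⬝ᵥ v := rfl

lemma dotv_mulVec {n p : ℕ} (M : Matrix (Fin p) (Fin n) ℝ) (hM : Mᵀ * M = 1)
    (x y : Fin n → ℝ) : dotv (M.mulVec x) (M.mulVec y) = dotv x y := by
  rw [dotv_eq_dot, dotv_eq_dot, Matrix.dotProduct_mulVec, ← Matrix.mulVec_transpose,
    Matrix.mulVec_mulVec, hM, Matrix.one_mulVec]

lemma col_prod {n m p : ℕ} (M : Matrix (Fin p) (Fin n) ℝ) (B : Matrix (Fin n) (Fin m) ℝ)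
    (d : Fin m → ℝ) (j : Fin m) :
    _root_.col (M * B * Matrix.diagonal d) j = d j • M.mulVec (_root_.col B j) := by
  funext i
  simp only [_root_.col, Matrix.mul_diagonal]
  simp only [Matrix.mul_apply, Pi.smul_apply, smul_eq_mul, Matrix.mulVec, dotProduct, _root_.col]
  ring

/-- If the centered matrix of `S` is obtained from the centered matrix of `O`
by a matrix with orthonormal columns and a positive diagonal rescaling, then `S` has all
centered columns nonzero and the same Pearson correlation matrix as `O`. -/
theorem corr_of_orthonormal_mul_diag {n m p : ℕ}
    (O : Matrix (Fin n) (Fin m) ℝ) (hO : ∀ j, _root_.col (centM O) j ≠ 0)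
    (M : Matrix (Fin p) (Fin n) ℝ) (hM : Mᵀ * M = 1)
    (d : Fin m → ℝ) (hd : ∀ j, 0 < d j)
    (S : Matrix (Fin p) (Fin m) ℝ) (hS : centM S = M * centM O * Matrix.diagonal d) :
    (∀ j, _root_.col (centM S) j ≠ 0) ∧ corrM S = corrM O := by
  have key : ∀ j, _root_.col (centM S) j = d j • M.mulVec (_root_.col (centM O) j) := by
    intro j; rw [hS]; exact col_prod M (centM O) d j
  have hdot : ∀ j k, dotv (_root_.col (centM S) j) (_root_.col (centM S) k)
      = d j * d k * dotv (_root_.col (centM O) j) (_root_.col (centM O) k) := by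
    intro j k
    rw [key j, key k]
    have := dotv_mulVec M hM (_root_.col (centM O) j) (_root_.col (centM O) k)
    simp only [dotv, Pi.smul_apply, smul_eq_mul] at this ⊢
    rw [← this, Finset.mul_sum]
    congr 1; ext i; ring
  have hnz : ∀ j, _root_.col (centM S) j ≠ 0 := by
    intro j h
    apply hO j
    have h2 : dotv (_root_.col (centM S) j) (_root_.col (centM S) j) = 0 := by
      simp [dotv, h]
    rw [hdot j j] at h2
    have hdd : d j * d j ≠ 0 := mul_ne_zero (hd j).ne' (hd j).ne'
    have h3 : dotv (_root_.col (centM O) j) (_root_.col (centM O) j) = 0 := by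
      rcases mul_eq_zero.mp h2 with h' | h'
      · exact absurd h' hdd
      · exact h'
    funext i
    have := (Finset.sum_eq_zero_iff_of_nonneg (fun i _ => mul_self_nonneg _)).mp h3 i
      (Finset.mem_univ i)
    have := mul_self_eq_zero.mp this
    simpa using this
  refine ⟨hnz, ?_⟩
  funext j k
  have hnorm : ∀ j, enormv (_root_.col (centM S) j) = d j * enormv (_root_.col (centM O) j) := by
    intro j
    rw [enormv, enormv, hdot j j]
    rw [show d j * d j = (d j)^2 by ring, Real.sqrt_mul (sq_nonneg _), Real.sqrt_sq (hd j).le]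
  have hOnz : ∀ j, enormv (_root_.col (centM O) j) ≠ 0 := by
    intro j hz
    apply hO j
    have : dotv (_root_.col (centM O) j) (_root_.col (centM O) j) = 0 := by
      have hnn : 0 ≤ dotv (_root_.col (centM O) j) (_root_.col (centM O) j) :=
        Finset.sum_nonneg (fun i _ => mul_self_nonneg _)
      have := Real.sqrt_eq_zero hnn |>.mp hz
      exact this
    funext i
    have := (Finset.sum_eq_zero_iff_of_nonneg (fun i _ => mul_self_nonneg _)).mp this i
      (Finset.mem_univ i)
    simpa using mul_self_eq_zero.mp this
  simp only [corrM, cosSim]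
  rw [hdot j k, hnorm j, hnorm k]
  rw [div_eq_div_iff]
  · ring
  · exact mul_ne_zero (mul_ne_zero (hd j).ne' (hOnz j)) (mul_ne_zero (hd k).ne' (hOnz k))
  · exact mul_ne_zero (hOnz j) (hOnz k)
end
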